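/- Extension of derivations to monogenic integral extensions: Let A → B be an injective ring homomorphism of integral domains, let b ∈ B, and let P be a monic polynomial with coefficients in A of minimal degree among nonzero polynomials over A vanishing at b (this corresponds to the minimal polynomial of b over Frac(A) having coefficients in A). Let S be a B-algebra and let d : A → S be a derivation (an additive map satisfying d(xy) = x·d(y) + y·d(x), with S regarded as an A-module via A → B → S). Set f := P'(b) ∈ B, where P' is the formal derivative of P. Then d extends uniquely to a derivation d' : A[b] → S_f, where A[b] := Algebra.adjoin A {b} and S_f is the localization of S away from the image of f; here extension means d'(algebraMap(a)) equals the image of d(a) in S_f for all a ∈ A, and d' is a derivation with respect to the A[b]-module structure on S_f. -/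

import Mathlib

open Polynomial TrivSqZeroExt

/-- A derivation on a commutative ring `T` with values in a commutative ring `M`,
where `M` is regarded as a `T`-module via the ring homomorphism `ρ : T →+* M`. -/
def IsDerivationVia {T M : Type*} [CommRing T] [CommRing M] (ρ : T →+* M) (d : T → M) : Prop :=
  (∀ x y : T, d (x + y) = d x + d y) ∧ (∀ x y : T, d (x * y) = ρ x * d y + ρ y * d x)

theorem IsDerivationVia.zero {T M : Type*} [CommRing T] [CommRing M] {ρ : T →+* M} {D : T → M}
    (h : IsDerivationVia ρ D) : D 0 = 0 := by
  have h0 := h.1 0 0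
  rw [add_zero] at h0
  exact left_eq_add.mp h0

theorem IsDerivationVia.one {T M : Type*} [CommRing T] [CommRing M] {ρ : T →+* M} {D : T → M}
    (h : IsDerivationVia ρ D) : D 1 = 0 := by
  have h1 := h.2 1 1
  rw [mul_one, map_one, one_mul] at h1
  exact left_eq_add.mp h1

theorem tsze_mul_def {R : Type*} [CommRing R] (x y : TrivSqZeroExt R R) :
    x * y = ⟨x.fst * y.fst, x.fst * y.snd + y.fst * x.snd⟩ := by
  refine TrivSqZeroExt.ext (fst_mul x y) ?_
  rw [snd_mul, smul_eq_mul, op_smul_eq_smul, smul_eq_mul]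
  rfl

/-- Package a derivation-via as a ring homomorphism into the trivial square-zero extension. -/
def IsDerivationVia.toHom {T M : Type*} [CommRing T] [CommRing M] (ρ : T →+* M) (D : T → M)
    (h : IsDerivationVia ρ D) : T →+* TrivSqZeroExt M M where
  toFun x := ⟨ρ x, D x⟩
  map_one' := TrivSqZeroExt.ext (map_one ρ) h.one
  map_mul' x y := by
    exact (TrivSqZeroExt.ext (x := (⟨ρ (x * y), D (x * y)⟩ : TrivSqZeroExt M M))
      (y := ⟨ρ x * ρ y, ρ x * D y + ρ y * D x⟩) (map_mul ρ x y) (h.2 x y)).trans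
      (tsze_mul_def (R := M) ⟨ρ x, D x⟩ ⟨ρ y, D y⟩).symm
  map_zero' := TrivSqZeroExt.ext (map_zero ρ) h.zero
  map_add' x y :=
    TrivSqZeroExt.ext (map_add ρ x y) (h.1 x y)

/-- Evaluation of a polynomial on the trivial square-zero extension: first-order Taylor. -/
theorem tsze_eval₂ {A R : Type*} [CommRing A] [CommRing R]
    (H : A →+* TrivSqZeroExt R R) (x t : R) (Q : Polynomial A) :
    Polynomial.eval₂ H (⟨x, t⟩ : TrivSqZeroExt R R) Q =
      ⟨Polynomial.eval₂ ((TrivSqZeroExt.fstHom R R R).toRingHom.comp H) x Q,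
        (Q.sum fun i a => (H a).snd * x ^ i) +
          Polynomial.eval₂ ((TrivSqZeroExt.fstHom R R R).toRingHom.comp H) x
            (Polynomial.derivative Q) * t⟩ := by
  induction Q using Polynomial.induction_on' with
  | add p q hp hq =>
      rw [eval₂_add (f := H) (x := (⟨x, t⟩ : TrivSqZeroExt R R)) (p := p) (q := q), hp, hq, map_add, eval₂_add, eval₂_add,
        Polynomial.sum_add_index _ _ _ (fun i => by simp) (fun i a b => by simp [mul_add, add_mul])]
      ext
      · rfl
      · show ((p.sum fun i a => (H a).snd * x ^ i) + Polynomial.eval₂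
            ((TrivSqZeroExt.fstHom R R R).toRingHom.comp H) x (Polynomial.derivative p) * t) +
          ((q.sum fun i a => (H a).snd * x ^ i) + Polynomial.eval₂
            ((TrivSqZeroExt.fstHom R R R).toRingHom.comp H) x (Polynomial.derivative q) * t) =
          ((p.sum fun i a => (H a).snd * x ^ i) + (q.sum fun i a => (H a).snd * x ^ i)) +
            (Polynomial.eval₂ ((TrivSqZeroExt.fstHom R R R).toRingHom.comp H) x
              (Polynomial.derivative p) + Polynomial.eval₂
              ((TrivSqZeroExt.fstHom R R R).toRingHom.comp H) x (Polynomial.derivative q)) * t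
        ring
  | monomial n a =>
      rw [eval₂_monomial (f := H) (x := (⟨x, t⟩ : TrivSqZeroExt R R)) (n := n) (r := a),
        eval₂_monomial, derivative_monomial, eval₂_monomial,
        Polynomial.sum_monomial_index a _ (by simp)]
      ext
      · simp [fst_mul, fst_pow (x := (⟨x, t⟩ : TrivSqZeroExt R R))]
      · simp only [snd_mul, snd_pow (x := (⟨x, t⟩ : TrivSqZeroExt R R)), fst_pow (x := (⟨x, t⟩ : TrivSqZeroExt R R)), RingHom.coe_comp, Function.comp_apply,
          AlgHom.toRingHom_eq_coe, RingHom.coe_coe, fstHom_apply, map_mul, map_natCast,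
          smul_eq_mul, op_smul_eq_smul]
        simp only [nsmul_eq_mul, Nat.pred_eq_sub_one, TrivSqZeroExt.fst, TrivSqZeroExt.snd]
        ring

set_option maxHeartbeats 1000000 in
theorem derivation_extends_to_monogenic
    {A B : Type*} [CommRing A] [IsDomain A] [CommRing B] [IsDomain B]
    [Algebra A B] (hinj : Function.Injective (algebraMap A B))
    (b : B) (P : Polynomial A) (hmonic : P.Monic)
    (hroot : Polynomial.aeval b P = 0)
    (hmin : ∀ Q : Polynomial A, Q ≠ 0 → Polynomial.aeval b Q = 0 → P.degree ≤ Q.degree)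
    (S : Type*) [CommRing S] [Algebra B S] [Algebra A S] [IsScalarTower A B S]
    (d : A → S) (hd : IsDerivationVia (algebraMap A S) d) :
    ∃! d' : Algebra.adjoin A {b} →
        Localization.Away (algebraMap B S (Polynomial.aeval b (Polynomial.derivative P))),
      IsDerivationVia
        ((algebraMap S (Localization.Away
            (algebraMap B S (Polynomial.aeval b (Polynomial.derivative P))))).comp
          ((algebraMap B S).comp ((Algebra.adjoin A {b}).val.toRingHom))) d' ∧
      ∀ a : A, d' (algebraMap A (Algebra.adjoin A {b}) a)
        = algebraMap S (Localization.Away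
            (algebraMap B S (Polynomial.aeval b (Polynomial.derivative P)))) (d a) := by
  classical
  set f : B := Polynomial.aeval b (Polynomial.derivative P) with hfdef
  set S' := Localization.Away (algebraMap B S f) with hS'
  set ι : S →+* S' := algebraMap S S' with hι
  set β : S' := ι (algebraMap B S b) with hβ
  set invf : S' := IsLocalization.Away.invSelf (S := S') (algebraMap B S f) with hinvf
  have hinv : ι (algebraMap B S f) * invf = 1 := IsLocalization.Away.mul_invSelf _
  have hdι : IsDerivationVia (ι.comp (algebraMap A S)) (fun a => ι (d a)) := by
    constructor
    · intro x y
      show ι (d (x + y)) = ι (d x) + ι (d y)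
      rw [hd.1, map_add]
    · intro x y
      show ι (d (x * y)) = (ι.comp (algebraMap A S)) x * ι (d y)
        + (ι.comp (algebraMap A S)) y * ι (d x)
      rw [hd.2, map_add, map_mul, map_mul]
      rfl
  set H : A →+* TrivSqZeroExt S' S' := IsDerivationVia.toHom _ _ hdι with hH
  set F : A →+* S' := (TrivSqZeroExt.fstHom S' S' S').toRingHom.comp H with hFdef
  have hev : ∀ Q : Polynomial A,
      Polynomial.eval₂ F β Q = ι (algebraMap B S (Polynomial.aeval b Q)) := by
    intro Q
    rw [Polynomial.aeval_def, Polynomial.hom_eval₂, Polynomial.hom_eval₂]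
    congr 1
    ext a
    show ι (algebraMap A S a) = ι (algebraMap B S (algebraMap A B a))
    rw [← IsScalarTower.algebraMap_apply A B S]
  set g : Polynomial A → S' := fun Q => Q.sum fun i a => (H a).snd * β ^ i with hg
  set θ : S' := -(g P) * invf with hθ
  set Φ : Polynomial A →+* TrivSqZeroExt S' S' := Polynomial.eval₂RingHom H ⟨β, θ⟩ with hΦdef
  have hΦ : ∀ Q : Polynomial A, Φ Q =
      (⟨Polynomial.eval₂ F β Q, g Q + Polynomial.eval₂ F β (Polynomial.derivative Q) * θ⟩ :
        TrivSqZeroExt S' S') := by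
    intro Q
    rw [hΦdef]
    exact tsze_eval₂ H β θ Q
  have hΦP : Φ P = 0 := by
    rw [hΦ]
    refine TrivSqZeroExt.ext ?_ ?_
    · show Polynomial.eval₂ F β P = (0 : TrivSqZeroExt S' S').fst
      rw [hev, hroot, map_zero, map_zero]; rfl
    · show g P + Polynomial.eval₂ F β (Polynomial.derivative P) * θ = (0 : TrivSqZeroExt S' S').snd
      rw [hev, ← hfdef, hθ]
      have h3 : ι (algebraMap B S f) * (-(g P) * invf)
          = -((ι (algebraMap B S f) * invf) * g P) := by ring
      rw [h3, hinv, one_mul]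
      show g P + -(g P) = (0 : TrivSqZeroExt S' S').snd
      rw [add_neg_cancel]; exact TrivSqZeroExt.snd_zero.symm
  have hdvd : ∀ Q : Polynomial A, Polynomial.aeval b Q = 0 → P ∣ Q := by
    intro Q hQ
    have hmod : Polynomial.aeval b (Q %ₘ P) = 0 := by
      have h4 := Polynomial.modByMonic_add_div Q P
      have h2 : Polynomial.aeval b (Q %ₘ P + P * (Q /ₘ P)) = Polynomial.aeval b Q := by rw [h4]
      rw [map_add, map_mul, hroot, zero_mul, add_zero, hQ] at h2
      exact h2
    by_cases h0 : Q %ₘ P = 0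
    · exact (Polynomial.modByMonic_eq_zero_iff_dvd hmonic).mp h0
    · exact absurd (hmin _ h0 hmod) (not_le.mpr (Polynomial.degree_modByMonic_lt Q hmonic))
  have hcong : ∀ Q1 Q2 : Polynomial A, Polynomial.aeval b Q1 = Polynomial.aeval b Q2 →
      Φ Q1 = Φ Q2 := by
    intro Q1 Q2 h
    obtain ⟨T, hT⟩ := hdvd (Q1 - Q2) (by rw [map_sub, h, sub_self])
    have h2 : Φ Q1 - Φ Q2 = 0 := by
      rw [← map_sub, hT, map_mul, hΦP, zero_mul]
    exact sub_eq_zero.mp h2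
  have hmem : ∀ x : Algebra.adjoin A {b}, ∃ Q : Polynomial A, Polynomial.aeval b Q = (x : B) := by
    intro x
    have hx : (x : B) ∈ (Polynomial.aeval (R := A) b).range := by
      rw [← Algebra.adjoin_singleton_eq_range_aeval]
      exact x.2
    exact hx
  set rep : Algebra.adjoin A {b} → Polynomial A := fun x => (hmem x).choose with hrepdef
  have hrep : ∀ x, Polynomial.aeval b (rep x) = (x : B) := fun x => (hmem x).choose_spec
  have hfst : ∀ Q : Polynomial A, (Φ Q).fst = ι (algebraMap B S (Polynomial.aeval b Q)) := by
    intro Q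
    rw [hΦ]
    show Polynomial.eval₂ F β Q = _
    rw [hev]
  refine ⟨fun x => (Φ (rep x)).snd, ⟨⟨?_, ?_⟩, ?_⟩, ?_⟩
  · -- additivity
    intro x y
    have h := hcong (rep (x + y)) (rep x + rep y) (by rw [map_add, hrep, hrep, hrep]; rfl)
    show (Φ (rep (x + y))).snd = _
    rw [h, map_add, snd_add]
  · -- Leibniz
    intro x y
    have h := hcong (rep (x * y)) (rep x * rep y) (by rw [map_mul, hrep, hrep, hrep]; rfl)
    show (Φ (rep (x * y))).snd = _
    rw [h, map_mul, snd_mul, smul_eq_mul, op_smul_eq_smul, smul_eq_mul, hfst, hfst, hrep, hrep]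
    rfl
  · -- extends d
    intro a
    have h := hcong (rep (algebraMap A (Algebra.adjoin A {b}) a)) (Polynomial.C a)
      (by rw [hrep, Polynomial.aeval_C]; rfl)
    show (Φ (rep (algebraMap A (Algebra.adjoin A {b}) a))).snd = _
    rw [h, hΦdef]
    exact congrArg TrivSqZeroExt.snd (eval₂_C H _)
  · -- uniqueness
    intro D hD
    obtain ⟨hDder, hDext⟩ := hD
    set ρ : (Algebra.adjoin A {b}) →+* S' :=
      (ι.comp ((algebraMap B S).comp ((Algebra.adjoin A {b}).val.toRingHom))) with hρ
    set T : (Algebra.adjoin A {b}) →+* TrivSqZeroExt S' S' :=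
      IsDerivationVia.toHom ρ D hDder with hT
    set bh : Algebra.adjoin A {b} := ⟨b, Algebra.self_mem_adjoin_singleton A b⟩ with hbh
    have hTa : T.comp (algebraMap A (Algebra.adjoin A {b})) = H := by
      refine RingHom.ext fun a => ?_
      refine TrivSqZeroExt.ext ?_ ?_
      · show ι (algebraMap B S ((algebraMap A (Algebra.adjoin A {b}) a : B))) =
          ι (algebraMap A S a)
        rw [show ((algebraMap A (Algebra.adjoin A {b}) a : B)) = algebraMap A B a from rfl,
          ← IsScalarTower.algebraMap_apply A B S]
      · exact hDext a
    have key : ∀ Q : Polynomial A,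
        T (Polynomial.aeval bh Q) = Polynomial.eval₂ H (T bh) Q := by
      intro Q
      rw [Polynomial.aeval_def, Polynomial.hom_eval₂, hTa]
    have hPbh : Polynomial.aeval bh P = 0 := by
      refine Subtype.ext ?_
      rw [Polynomial.coe_aeval_mk_apply, hroot]
      rfl
    have hTbh : T bh = (⟨β, θ⟩ : TrivSqZeroExt S' S') := by
      have h0 := key P
      rw [hPbh, map_zero] at h0
      have hTb : T bh = (⟨β, D bh⟩ : TrivSqZeroExt S' S') := rfl
      rw [hTb, tsze_eval₂ H β (D bh) P] at h0
      have hsnd : g P + Polynomial.eval₂ F β (Polynomial.derivative P) * D bh = 0 :=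
        congrArg TrivSqZeroExt.snd h0.symm
      rw [hev, ← hfdef] at hsnd
      have h2 : ι (algebraMap B S f) * D bh = -(g P) := by linear_combination hsnd
      have hsolve : D bh = θ := by
        have h1 : D bh = (ι (algebraMap B S f) * invf) * D bh := by rw [hinv, one_mul]
        rw [h1, mul_comm (ι (algebraMap B S f)) invf, mul_assoc, h2, hθ]
        ring
      rw [hTb, hsolve]
    funext x
    have hx : Polynomial.aeval bh (rep x) = x := by
      refine Subtype.ext ?_
      rw [Polynomial.coe_aeval_mk_apply, hrep]
    have hTx : T x = Φ (rep x) := by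
      conv_lhs => rw [← hx]
      rw [key, hTbh, hΦdef]; rfl
    exact congrArg TrivSqZeroExt.snd hTx
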